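/- Every well-ordering (X, ≺) of a set of reals admits, for each x ∈ X, the set of ≺-predecessors of x; if moreover X = ℝ and ≺ has order type ω₁, then ℝ ∖ alg_ℝ(ℚ) can be written as a countable-indexed union over (n, t-position data) of sets on each of which the map x ↦ (the ≺-greatest element of the minimal transcendence-basis support of x) is injective, and each such set is algebraically independent over ℚ. -/

import Mathlib

private lemma polyTrans {K K' : Type} [CommRing K] [CommRing K']
    [Algebra K ℝ] [Algebra K' ℝ]
    (f : K →+* K') (hinj : Function.Injective f)
    (hf : (algebraMap K' ℝ).comp f = algebraMap K ℝ) {x : ℝ}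
    (h : IsAlgebraic K x) : IsAlgebraic K' x := by
  obtain ⟨p, hp, hpx⟩ := h
  refine ⟨p.map f, by simpa [Polynomial.map_eq_zero_iff hinj] using hp, ?_⟩
  rw [Polynomial.aeval_def, Polynomial.eval₂_map, hf, ← Polynomial.aeval_def]
  exact hpx

private lemma ifMono {s s' : Set ℝ} (hss : s ⊆ s') {x : ℝ}
    (h : IsAlgebraic (IntermediateField.adjoin ℚ s) x) :
    IsAlgebraic (IntermediateField.adjoin ℚ s') x := by
  have hle : IntermediateField.adjoin ℚ s ≤ IntermediateField.adjoin ℚ s' :=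
    IntermediateField.adjoin.mono _ _ _ hss
  exact polyTrans (IntermediateField.inclusion hle).toRingHom
    (IntermediateField.inclusion_injective hle) (by ext a; rfl) h

set_option synthInstance.maxHeartbeats 400000 in
set_option maxHeartbeats 1000000 in
private lemma fracBridge (s : Set ℝ) (x : ℝ) :
    IsAlgebraic (IntermediateField.adjoin ℚ s) x ↔ IsAlgebraic (Algebra.adjoin ℚ s) x := by
  letI : Algebra (Algebra.adjoin ℚ s) (IntermediateField.adjoin ℚ s) :=
    (Subalgebra.inclusion (IntermediateField.algebra_adjoin_le_adjoin ℚ s)).toRingHom.toAlgebra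
  haveI : IsScalarTower (Algebra.adjoin ℚ s) (IntermediateField.adjoin ℚ s) ℝ :=
    IsScalarTower.of_algebraMap_eq (congrFun rfl)
  have hincl : Function.Injective
      (algebraMap (Algebra.adjoin ℚ s) (IntermediateField.adjoin ℚ s)) :=
    Subalgebra.inclusion_injective _
  haveI : IsFractionRing (Algebra.adjoin ℚ s) (IntermediateField.adjoin ℚ s) := by
    refine ⟨⟨?_, ?_, ?_⟩⟩
    · rintro ⟨y, hy⟩
      have hy0 : y ≠ 0 := nonZeroDivisors.ne_zero hy
      refine isUnit_iff_ne_zero.2 fun h0 => hy0 (hincl ?_)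
      simpa using h0
    · intro z
      obtain ⟨rp, qp, hz⟩ := (IntermediateField.mem_adjoin_iff ℚ (z : ℝ)).1 z.2
      have hmem : ∀ p : MvPolynomial s ℚ,
          (MvPolynomial.aeval (Subtype.val : s → ℝ)) p ∈ Algebra.adjoin ℚ s := by
        intro p
        have h1 : Algebra.adjoin ℚ s = Algebra.adjoin ℚ (Set.range (Subtype.val : s → ℝ)) := by
          rw [Subtype.range_coe]
        rw [h1, Algebra.adjoin_range_eq_range_aeval]
        exact ⟨p, rfl⟩
      by_cases hq : (MvPolynomial.aeval (Subtype.val : s → ℝ)) qp = 0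
      · refine ⟨⟨0, 1⟩, ?_⟩
        have : (z : ℝ) = 0 := by rw [hz, hq, div_zero]
        apply Subtype.ext
        simpa using this
      · refine ⟨⟨⟨_, hmem rp⟩, ⟨⟨_, hmem qp⟩, mem_nonZeroDivisors_of_ne_zero ?_⟩⟩, ?_⟩
        · exact fun h0 => hq (by simpa using congrArg Subtype.val h0)
        · apply Subtype.ext
          show (z : ℝ) * _ = _
          rw [hz]
          exact div_mul_cancel₀ _ hq
    · intro a b hab
      exact ⟨1, by simpa using hincl hab⟩
  exact (IsFractionRing.isAlgebraic_iff (Algebra.adjoin ℚ s) (IntermediateField.adjoin ℚ s) ℝ).symm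

private lemma indepInsertIff {s : Set ℝ} {a : ℝ} (ha : a ∉ s)
    (hs : AlgebraicIndependent ℚ ((↑) : s → ℝ)) :
    AlgebraicIndependent ℚ ((↑) : ↑(insert a s) → ℝ) ↔
      Transcendental (IntermediateField.adjoin ℚ s) a := by
  classical
  have hopt : (AlgebraicIndependent ℚ fun o : Option s => o.elim a (↑)) ↔
      Transcendental (Algebra.adjoin ℚ s) a := by
    have := hs.option_iff_transcendental a
    rwa [Subtype.range_coe] at this
  have hbr : Transcendental (IntermediateField.adjoin ℚ s) a ↔
      Transcendental (Algebra.adjoin ℚ s) a := not_congr (fracBridge s a)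
  have hfun : ((↑) : ↑(insert a s) → ℝ) ∘ (Set.subtypeInsertEquivOption ha).symm =
      fun o : Option s => o.elim a (↑) := by
    ext o
    cases o with
    | none => simp [Set.subtypeInsertEquivOption]
    | some z => simp [Set.subtypeInsertEquivOption]
  rw [hbr, ← hopt]
  constructor
  · intro h
    have h2 := h.comp _ (Equiv.injective (Set.subtypeInsertEquivOption ha).symm)
    rwa [hfun] at h2
  · intro h
    have h2 := h.comp _ (Equiv.injective (Set.subtypeInsertEquivOption ha))
    have : (fun o : Option s => o.elim a (↑)) ∘ (Set.subtypeInsertEquivOption ha) =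
        ((↑) : ↑(insert a s) → ℝ) := by
      rw [← hfun, Function.comp_assoc]
      simp
    rwa [this] at h2

private lemma restrictScalarsTrans {F : IntermediateField ℚ ℝ} {C : IntermediateField F ℝ}
    {x : ℝ} (h : IsAlgebraic (C.restrictScalars ℚ) x) : IsAlgebraic C x := by
  refine polyTrans (K := (C.restrictScalars ℚ)) (K' := C)
    ⟨⟨⟨fun a => ⟨a.1, a.2⟩, rfl⟩, fun _ _ => rfl⟩, rfl, fun _ _ => rfl⟩
    (fun a b hab => Subtype.ext (congrArg Subtype.val hab)) (by ext a; rfl) h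

private lemma absorb (S V : Set ℝ)
    (hV : ∀ y ∈ V, IsAlgebraic (IntermediateField.adjoin ℚ S) y)
    {x : ℝ} (hx : IsAlgebraic (IntermediateField.adjoin ℚ (S ∪ V)) x) :
    IsAlgebraic (IntermediateField.adjoin ℚ S) x := by
  set F := IntermediateField.adjoin ℚ S with hF
  set C := algebraicClosure F ℝ with hC
  have hSC : S ∪ V ⊆ (C.restrictScalars ℚ : Set ℝ) := by
    rintro b (hbS | hbV)
    · have hbF : b ∈ F := IntermediateField.subset_adjoin ℚ S hbS
      have : IsAlgebraic F b := by
        simpa using isAlgebraic_algebraMap (R := F) (A := ℝ) (⟨b, hbF⟩ : F)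
      exact mem_algebraicClosure_iff.2 this
    · exact mem_algebraicClosure_iff.2 (hV b hbV)
  have h1 : IsAlgebraic (C.restrictScalars ℚ) x := by
    have hle : IntermediateField.adjoin ℚ (S ∪ V) ≤ C.restrictScalars ℚ :=
      IntermediateField.adjoin_le_iff.2 hSC
    exact polyTrans (IntermediateField.inclusion hle).toRingHom
      (IntermediateField.inclusion_injective hle) (by ext a; rfl) hx
  have h2 : IsAlgebraic C x := restrictScalarsTrans h1
  haveI : Algebra.IsIntegral F C := Algebra.isAlgebraic_iff_isIntegral.1 inferInstance
  have h3 : IsIntegral C x := isAlgebraic_iff_isIntegral.1 h2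
  exact (isIntegral_trans x h3).isAlgebraic

private lemma support_min {T : Set ℝ} (hT : IsTranscendenceBasis ℚ ((↑) : T → ℝ))
    (M : ℝ → Finset ℝ)
    (hM : ∀ x : ℝ, Transcendental ℚ x →
      ↑(M x) ⊆ T ∧ IsAlgebraic (IntermediateField.adjoin ℚ ((M x : Set ℝ))) x ∧
        ∀ S' : Finset ℝ, S' ⊂ M x →
          ¬ IsAlgebraic (IntermediateField.adjoin ℚ ((S' : Set ℝ))) x)
    {x : ℝ} (hx : Transcendental ℚ x) (U : Finset ℝ) (hU : ↑U ⊆ T)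
    (halg : IsAlgebraic (IntermediateField.adjoin ℚ (U : Set ℝ)) x) :
    M x ⊆ U := by
  classical
  intro t ht
  by_contra htU
  obtain ⟨hMT, hmx, hmin⟩ := hM x hx
  have hmin' := hmin _ (Finset.erase_ssubset ht)
  set s₀ : Set ℝ := ↑((M x).erase t) with hs₀
  have hs₀T : s₀ ⊆ T := fun b hb => hMT (Finset.erase_subset _ _ hb)
  have hxs₀ : x ∉ s₀ := by
    intro hxs
    exact hmin' (by
      simpa using isAlgebraic_algebraMap (A := ℝ)
        (⟨x, IntermediateField.subset_adjoin ℚ s₀ hxs⟩ : IntermediateField.adjoin ℚ s₀))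
  have hts₀ : t ∉ s₀ := by simp [hs₀]
  have hins : insert t s₀ = ((M x : Finset ℝ) : Set ℝ) := by
    rw [hs₀, ← Finset.coe_insert, Finset.insert_erase ht]
  have hex : IsAlgebraic (IntermediateField.adjoin ℚ (insert x s₀)) t := by
    by_contra hnt
    have hindep_s₀ : AlgebraicIndependent ℚ ((↑) : s₀ → ℝ) := hT.1.mono hs₀T
    have hxi : AlgebraicIndependent ℚ ((↑) : ↑(insert x s₀) → ℝ) :=
      (indepInsertIff hxs₀ hindep_s₀).2 hmin'
    have htx : t ≠ x := by
      rintro rfl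
      exact hnt (by
        simpa using isAlgebraic_algebraMap (A := ℝ)
          (⟨t, IntermediateField.subset_adjoin ℚ _ (Set.mem_insert _ _)⟩ :
            IntermediateField.adjoin ℚ (insert t s₀)))
    have htins : t ∉ insert x s₀ := by
      rintro (h | h)
      · exact htx h
      · exact hts₀ h
    have hbig : AlgebraicIndependent ℚ ((↑) : ↑(insert t (insert x s₀)) → ℝ) :=
      (indepInsertIff htins hxi).2 hnt
    rw [Set.insert_comm] at hbig
    have hxout : x ∉ insert t s₀ := by
      rintro (h | h)
      · exact htx h.symm
      · exact hxs₀ h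
    have hindep_ts₀ : AlgebraicIndependent ℚ ((↑) : ↑(insert t s₀) → ℝ) :=
      hbig.mono (Set.subset_insert _ _)
    have hfin := (indepInsertIff hxout hindep_ts₀).1 hbig
    rw [hins] at hfin
    exact hfin hmx
  have hUs₀x : IsAlgebraic (IntermediateField.adjoin ℚ ((↑U ∪ s₀) ∪ {x})) t := by
    refine ifMono ?_ hex
    rintro b (rfl | hb)
    · exact Or.inr rfl
    · exact Or.inl (Or.inr hb)
  have hxUs₀ : IsAlgebraic (IntermediateField.adjoin ℚ (↑U ∪ s₀)) x :=
    ifMono Set.subset_union_left halg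
  have ht' : IsAlgebraic (IntermediateField.adjoin ℚ (↑U ∪ s₀)) t := by
    refine absorb (↑U ∪ s₀) {x} ?_ hUs₀x
    rintro y rfl
    exact hxUs₀
  have hsubT : (↑U ∪ s₀ : Set ℝ) ⊆ T := Set.union_subset hU hs₀T
  have htTU : t ∉ (↑U ∪ s₀ : Set ℝ) := by
    rintro (h | h)
    · exact htU h
    · exact hts₀ h
  have hindepU : AlgebraicIndependent ℚ ((↑) : ↑(↑U ∪ s₀ : Set ℝ) → ℝ) := hT.1.mono hsubT
  have hindepUt : AlgebraicIndependent ℚ ((↑) : ↑(insert t (↑U ∪ s₀ : Set ℝ)) → ℝ) :=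
    hT.1.mono (Set.insert_subset (hMT ht) hsubT)
  exact (indepInsertIff htTU hindepU).1 hindepUt ht'

private lemma finsetMax (r : ℝ → ℝ → Prop) (hwo : IsWellOrder ℝ r) :
    ∀ w : Finset ℝ, w.Nonempty → ∃ b ∈ w, ∀ c ∈ w, c ≠ b → r c b := by
  classical
  haveI : IsTrans ℝ r := by haveI := hwo; infer_instance
  haveI := hwo.toTrichotomous
  intro w
  induction w using Finset.induction_on with
  | empty => rintro ⟨b, hb⟩; simp at hb
  | @insert a u hau ih =>
    intro _
    rcases u.eq_empty_or_nonempty with rfl | hu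
    · refine ⟨a, by simp, ?_⟩
      intro c hc hca
      simp only [Finset.mem_insert, Finset.notMem_empty, or_false] at hc
      exact absurd hc hca
    · obtain ⟨b, hb, hmax⟩ := ih hu
      rcases trichotomous_of r a b with hab | rfl | hba
      · refine ⟨b, Finset.mem_insert_of_mem hb, ?_⟩
        intro c hc hcb
        rcases Finset.mem_insert.1 hc with rfl | hcu
        · exact hab
        · exact hmax c hcu hcb
      · refine ⟨a, Finset.mem_insert_of_mem hb, ?_⟩
        intro c hc hcb
        rcases Finset.mem_insert.1 hc with rfl | hcu
        · exact absurd rfl hcb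
        · exact hmax c hcu hcb
      · refine ⟨a, Finset.mem_insert_self _ _, ?_⟩
        intro c hc hca
        rcases Finset.mem_insert.1 hc with rfl | hcu
        · exact absurd rfl hca
        · rcases eq_or_ne c b with rfl | hcb
          · exact hba
          · exact IsTrans.trans c b a (hmax c hcu hcb) hba

private lemma algSetCountable (u : Finset ℝ) :
    {y : ℝ | IsAlgebraic (IntermediateField.adjoin ℚ (u : Set ℝ)) y}.Countable := by
  haveI : Finite ↥(u : Set ℝ) := u.finite_toSet.to_subtype
  haveI : Countable (IntermediateField.adjoin ℚ (u : Set ℝ)) := by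
    rw [← Cardinal.mk_le_aleph0_iff]
    refine (IntermediateField.cardinalMk_adjoin_le ℚ _).trans ?_
    simp only [sup_le_iff]
    exact ⟨⟨Cardinal.mk_le_aleph0, Cardinal.mk_le_aleph0⟩, le_rfl⟩
  haveI : Module.IsTorsionFree (IntermediateField.adjoin ℚ (u : Set ℝ)) ℝ :=
    Module.isTorsionFree_iff_algebraMap_injective.2 (algebraMap (IntermediateField.adjoin ℚ (u : Set ℝ)) ℝ).injective
  exact Algebraic.countable _ _
theorem stmt19 (r : ℝ → ℝ → Prop) (hwo : IsWellOrder ℝ r)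
    (hω₁ : ∀ x : ℝ, {y : ℝ | r y x}.Countable)
    (T : Set ℝ) (hT : IsTranscendenceBasis ℚ ((↑) : T → ℝ))
    (M : ℝ → Finset ℝ)
    (hM : ∀ x : ℝ, Transcendental ℚ x →
      ↑(M x) ⊆ T ∧ IsAlgebraic (IntermediateField.adjoin ℚ ((M x : Set ℝ))) x ∧
        ∀ S' : Finset ℝ, S' ⊂ M x →
          ¬ IsAlgebraic (IntermediateField.adjoin ℚ ((S' : Set ℝ))) x)
    (L : ℝ → ℝ)
    (hL : ∀ x : ℝ, Transcendental ℚ x →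
      L x ∈ M x ∧ ∀ t ∈ M x, t ≠ L x → r t (L x)) :
    ∃ S : ℕ → Set ℝ,
      {x : ℝ | Transcendental ℚ x} = ⋃ m, S m ∧
      ∀ m, Set.InjOn L (S m) ∧ AlgebraicIndependent ℚ ((↑) : S m → ℝ) := by
  classical
  haveI : IsTrans ℝ r := by haveI := hwo; infer_instance
  have hirr : ∀ z : ℝ, ¬ r z z := fun z hz =>
    (hwo.toIsWellFounded.wf.isIrrefl).irrefl z hz
  choose g hg using fun t : ℝ => Set.countable_iff_exists_injOn.1 (hω₁ t)
  choose h hh using fun u : Finset ℝ => Set.countable_iff_exists_injOn.1 (algSetCountable u)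
  set e : ℝ → Finset ℕ × ℕ :=
    fun x => (((M x).erase (L x)).image (g (L x)), h (M x) x) with he
  set Sm : ℕ → Set ℝ :=
    fun m => {x | Transcendental ℚ x ∧ Encodable.encode (e x) = m} with hSm
  have hinj : ∀ m, Set.InjOn L (Sm m) := by
    rintro m x ⟨hx, hex⟩ y ⟨hy, hey⟩ hLxy
    have hee : e x = e y := Encodable.encode_injective (hex.trans hey.symm)
    obtain ⟨hMx, hax, _⟩ := hM x hx
    obtain ⟨hMy, hay, _⟩ := hM y hy
    obtain ⟨hLx, hLx'⟩ := hL x hx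
    obtain ⟨hLy, hLy'⟩ := hL y hy
    have h1 : ((M x).erase (L x)).image (g (L x)) = ((M y).erase (L y)).image (g (L y)) :=
      congrArg Prod.fst hee
    have h2 : h (M x) x = h (M y) y := congrArg Prod.snd hee
    have hkey : ∀ a : ℝ, a ∈ (M x).erase (L x) → a ∈ (M y).erase (L y) := by
      intro a haa
      have haP : r a (L x) := hLx' a (Finset.mem_of_mem_erase haa) (Finset.ne_of_mem_erase haa)
      have : g (L x) a ∈ ((M y).erase (L y)).image (g (L y)) := by
        rw [← h1]; exact Finset.mem_image_of_mem _ haa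
      obtain ⟨b, hb, hba⟩ := Finset.mem_image.1 this
      have hbP : r b (L y) := hLy' b (Finset.mem_of_mem_erase hb) (Finset.ne_of_mem_erase hb)
      have hba' : b = a := by
        apply hg (L x) _ _ (by rw [hLxy] at hba ⊢; exact hba)
        · show r b (L x); rw [hLxy]; exact hbP
        · exact haP
      rwa [← hba']
    have hkey' : ∀ a : ℝ, a ∈ (M y).erase (L y) → a ∈ (M x).erase (L x) := by
      intro a haa
      have haP : r a (L y) := hLy' a (Finset.mem_of_mem_erase haa) (Finset.ne_of_mem_erase haa)
      have : g (L y) a ∈ ((M x).erase (L x)).image (g (L x)) := by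
        rw [h1]; exact Finset.mem_image_of_mem _ haa
      obtain ⟨b, hb, hba⟩ := Finset.mem_image.1 this
      have hbP : r b (L x) := hLx' b (Finset.mem_of_mem_erase hb) (Finset.ne_of_mem_erase hb)
      have hba' : b = a := by
        apply hg (L y) _ _ (by rw [← hLxy] at hba ⊢; exact hba)
        · show r b (L y); rw [← hLxy]; exact hbP
        · exact haP
      rwa [← hba']
    have herase : (M x).erase (L x) = (M y).erase (L y) :=
      Finset.ext fun a => ⟨hkey a, hkey' a⟩
    have hMxy : M x = M y := by
      have hx1 := Finset.insert_erase hLx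
      rw [herase, hLxy, Finset.insert_erase hLy] at hx1
      exact hx1.symm
    refine hh (M x) hax ?_ ?_
    · show y ∈ {z : ℝ | IsAlgebraic _ z}
      rw [hMxy]; exact hay
    · rw [h2, hMxy]
  refine ⟨Sm, ?_, ?_⟩
  · ext x
    simp only [Set.mem_setOf_eq, Set.mem_iUnion, hSm]
    exact ⟨fun hx => ⟨Encodable.encode (e x), hx, rfl⟩, fun ⟨m, hx, _⟩ => hx⟩
  · intro m
    refine ⟨hinj m, ?_⟩
    have core : ∀ n (u : Finset ℝ), u.card = n → ↑u ⊆ Sm m →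
        AlgebraicIndependent ℚ ((↑) : ↑(u : Set ℝ) → ℝ) := by
      intro n
      induction n using Nat.strong_induction_on with
      | _ n ih =>
        intro u hcard hu
        rcases u.eq_empty_or_nonempty with rfl | hne
        · simpa using algebraicIndependent_empty (K := ℚ) (A := ℝ)
        · obtain ⟨b, hb, hmaxb⟩ := finsetMax r hwo (u.image L) (hne.image L)
          obtain ⟨x, hxu, rfl⟩ := Finset.mem_image.1 hb
          set v := u.erase x with hv
          have hvsub : ↑v ⊆ Sm m := fun a ha => hu (Finset.erase_subset _ _ ha)
          have hvcard : v.card < n := by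
            rw [← hcard]; exact Finset.card_erase_lt_of_mem hxu
          have hvind := ih _ hvcard v rfl hvsub
          have hxv : x ∉ (v : Set ℝ) := by simp [hv]
          have hxt : Transcendental ℚ x := (hu hxu).1
          have hmax : ∀ y ∈ v, r (L y) (L x) := by
            intro y hy
            have hyu : y ∈ u := Finset.mem_of_mem_erase hy
            have hyx : y ≠ x := Finset.ne_of_mem_erase hy
            have hLyx : L y ≠ L x := fun hq => hyx (hinj m (hu hyu) (hu hxu) hq)
            exact hmaxb (L y) (Finset.mem_image_of_mem L hyu) hLyx
          have htr : Transcendental (IntermediateField.adjoin ℚ (v : Set ℝ)) x := by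
            intro halg
            set W := v.biUnion M with hW
            have hWT : (W : Set ℝ) ⊆ T := by
              intro a ha
              obtain ⟨y, hy, hay⟩ := Finset.mem_biUnion.1 (Finset.mem_coe.1 ha)
              exact (hM y (hvsub hy).1).1 hay
            have hvalg : ∀ y ∈ (v : Set ℝ),
                IsAlgebraic (IntermediateField.adjoin ℚ (W : Set ℝ)) y := by
              intro y hy
              refine ifMono ?_ (hM y (hvsub hy).1).2.1
              intro a ha
              exact Finset.mem_coe.2 (Finset.mem_biUnion.2 ⟨y, hy, ha⟩)
            have hxW : IsAlgebraic (IntermediateField.adjoin ℚ (W : Set ℝ)) x := by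
              refine absorb _ _ hvalg (ifMono Set.subset_union_right halg)
            have hsupp := support_min hT M hM hxt W hWT hxW
            obtain ⟨y, hyv, hLy⟩ := Finset.mem_biUnion.1 (hsupp (hL x hxt).1)
            have hyx : y ≠ x := Finset.ne_of_mem_erase hyv
            have hyt : Transcendental ℚ y := (hvsub hyv).1
            rcases eq_or_ne (L x) (L y) with heq | hne'
            · exact hyx (hinj m (hvsub hyv) (hu hxu) heq.symm)
            · have hr1 : r (L x) (L y) := (hL y hyt).2 (L x) hLy hne'
              have hr2 : r (L y) (L x) := hmax y hyv
              exact hirr (L x) (IsTrans.trans _ _ _ hr1 hr2)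
          have hres : AlgebraicIndependent ℚ ((↑) : ↑(insert x (v : Set ℝ)) → ℝ) :=
            (indepInsertIff hxv hvind).2 htr
          have hueq : (u : Set ℝ) = insert x (v : Set ℝ) := by
            rw [hv, ← Finset.coe_insert, Finset.insert_erase hxu]
          rw [hueq]
          exact hres
    refine algebraicIndependent_of_finite' _ ((algebraMap ℚ ℝ).injective) ?_
    intro t hts htfin _ a haS hat
    have hfin2 : (insert a t).Finite := Set.Finite.insert a htfin
    have hsub : ↑hfin2.toFinset ⊆ Sm m := by
      intro z hz
      rw [Finset.mem_coe, Set.Finite.mem_toFinset] at hz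
      rcases hz with rfl | hzt
      · exact haS
      · exact hts hzt
    have hind := core hfin2.toFinset.card hfin2.toFinset rfl hsub
    rw [Set.Finite.coe_toFinset] at hind
    have hta : AlgebraicIndependent ℚ ((↑) : ↑t → ℝ) := hind.mono (Set.subset_insert _ _)
    have hfinal := (indepInsertIff hat hta).1 hind
    exact fun halg => hfinal ((fracBridge _ _).2 halg)
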